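/- Let T be a quantum channel on M_n and V ⊆ ℂⁿ a subspace such that 1 is not an eigenvalue of the map ℚT : M_n → M_n (Assumption I). Let Λ = Λ_{T,V} be the induced QMC, A := I − Λ, and let A^# be the group inverse of A (which exists). Then I − ℚ₁Λ is invertible, K_{11} := [Λ(I−ℚ₁Λ)^{−2}]_{11} is well-defined, and for every state ρ supported in V^⊥ (i.e. ρ = QρQ) the mean hitting time of T to V from ρ satisfies τ(ρ→V) = Σ_{r≥1} r·Tr(ℙT(ℚT)^{r−1}ρ) = Tr( K_{11}( [(I − A^# + A^#_d E)]_{12}(ρ) ) ), which is the (1,2) block of D(I − A^# + A^#_d E) applied to ρ, with D = diag(K_{11}, K_{22}) block-diagonal (only K_{11} enters this block). -/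

import Mathlib

open Matrix
open Filter Topology
open scoped ComplexOrder

noncomputable section

/-- The algebra of `n × n` complex matrices. -/
abbrev Mn (n : ℕ) : Type := Matrix (Fin n) (Fin n) ℂ

/-- The map `X ↦ Q X Q`. -/
def sandwich {n : ℕ} (Q : Mn n) : Module.End ℂ (Mn n) :=
  (LinearMap.mulLeft ℂ Q).comp (LinearMap.mulRight ℂ Q)

/-- The sum of the two components of a pair. -/
def sumPair (n : ℕ) : (Mn n × Mn n) →ₗ[ℂ] Mn n :=
  LinearMap.fst ℂ (Mn n) (Mn n) + LinearMap.snd ℂ (Mn n) (Mn n)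

/-- The QMC `Λ_{T,V}` induced by the channel `T` and the subspace `V` (with orthogonal
projection `P` onto `V` and `Q = I − P`):
`Λ(X₁,X₂) = ((I−ℚ)(T(X₁+X₂)), ℚ(T(X₁+X₂)))` where `ℚ(Y) = QYQ`. -/
def Lam {n : ℕ} (T : Module.End ℂ (Mn n)) (Q : Mn n) : Module.End ℂ (Mn n × Mn n) :=
  LinearMap.prod
    (((1 : Module.End ℂ (Mn n)) - sandwich Q) ∘ₗ (T ∘ₗ sumPair n))
    ((sandwich Q) ∘ₗ (T ∘ₗ sumPair n))

/-- `ℙ₁(X₁,X₂) = (X₁,0)`. -/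
def proj1 (n : ℕ) : Module.End ℂ (Mn n × Mn n) :=
  (LinearMap.inl ℂ (Mn n) (Mn n)).comp (LinearMap.fst ℂ (Mn n) (Mn n))

/-- `ℙ₂(X₁,X₂) = (0,X₂)`. -/
def proj2 (n : ℕ) : Module.End ℂ (Mn n × Mn n) :=
  (LinearMap.inr ℂ (Mn n) (Mn n)).comp (LinearMap.snd ℂ (Mn n) (Mn n))

/-- The block-diagonal part `S_d = diag(S₁₁,S₂₂)` of a map on `M_n ⊕ M_n`. -/
def diagPart {n : ℕ} (S : Module.End ℂ (Mn n × Mn n)) : Module.End ℂ (Mn n × Mn n) :=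
  proj1 n * S * proj1 n + proj2 n * S * proj2 n

/-- The map `E(X₁,X₂) = (X₁+X₂, X₁+X₂)`. -/
def Emap (n : ℕ) : Module.End ℂ (Mn n × Mn n) :=
  LinearMap.prod (sumPair n) (sumPair n)

/-- The map `Θ_W(X₁,X₂) = Tr(X₁+X₂)·W`. -/
def Theta {n : ℕ} (W : Mn n × Mn n) : Module.End ℂ (Mn n × Mn n) :=
  ((Matrix.traceLinearMap (Fin n) ℂ ℂ) ∘ₗ sumPair n).smulRight W

/-- The mean hitting time `τ(ρ → V) = Σ_{r ≥ 1} r·Tr(ℙT(ℚT)^{r−1} ρ)`. -/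
def tau {n : ℕ} (T : Module.End ℂ (Mn n)) (P Q : Mn n) (ρ : Mn n) : ℂ :=
  ∑' r : ℕ, ((r : ℂ) + 1) * ((sandwich P * T * (sandwich Q * T) ^ r) ρ).trace

/-- The pure state `ρ_φ = |φ⟩⟨φ|`. -/
def rhoOf {n : ℕ} (φ : Fin n → ℂ) : Mn n := Matrix.vecMulVec φ (star φ)

/-- A positive map on `M_n`. -/
def IsPosMap {n : ℕ} (T : Module.End ℂ (Mn n)) : Prop :=
  ∀ X : Mn n, X.PosSemidef → (T X).PosSemidef

/-- A trace-preserving map on `M_n`. -/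
def IsTracePreserving {n : ℕ} (T : Module.End ℂ (Mn n)) : Prop :=
  ∀ X : Mn n, (T X).trace = X.trace

/-- A quantum channel: a completely positive trace-preserving map, given by a Kraus
decomposition `T(X) = Σᵢ Vᵢ X Vᵢ*` with `Σᵢ Vᵢ* Vᵢ = I`. -/
def IsChannel {n : ℕ} (T : Module.End ℂ (Mn n)) : Prop :=
  ∃ (k : ℕ) (V : Fin k → Mn n),
    (∀ X : Mn n, T X = ∑ i, V i * X * (V i)ᴴ) ∧ (∑ i, (V i)ᴴ * V i = 1)

/-- Irreducibility of a positive map on `M_n`: the only orthogonal projections `P` with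
`T(P M_n P) ⊆ P M_n P` are `P = 0` and `P = I`. -/
def IsIrreducibleMap {n : ℕ} (T : Module.End ℂ (Mn n)) : Prop :=
  ∀ P : Mn n, P.IsHermitian → P * P = P →
    (∀ X : Mn n, ∃ Y : Mn n, T (P * X * P) = P * Y * P) → P = 0 ∨ P = 1

section Stmt5Aux

variable {n : ℕ}

lemma psd_diag_nonneg {Z : Mn n} (hZ : Z.PosSemidef) (i : Fin n) : 0 ≤ Z i i := by
  have h := hZ.dotProduct_mulVec_nonneg (Pi.single i 1)
  simpa [dotProduct, mulVec_single, Pi.single_apply, apply_ite] using h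

lemma psd_trace_nonneg {Z : Mn n} (hZ : Z.PosSemidef) : 0 ≤ Z.trace := by
  unfold Matrix.trace
  exact Finset.sum_nonneg fun i _ => psd_diag_nonneg hZ i

lemma psd_diag_le_trace {Z : Mn n} (hZ : Z.PosSemidef) (i : Fin n) : Z i i ≤ Z.trace := by
  unfold Matrix.trace
  exact Finset.single_le_sum (fun j _ => psd_diag_nonneg hZ j) (Finset.mem_univ i)

lemma psd_trace_real {Z : Mn n} (hZ : Z.PosSemidef) : Z.trace = (Z.trace.re : ℂ) := by
  have h := psd_trace_nonneg hZ
  rw [Complex.le_def] at h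
  exact Complex.ext rfl (by simpa using h.2.symm)

lemma psd_entry_abs_le_trace {Z : Mn n} (hZ : Z.PosSemidef) (i j : Fin n) :
    ‖Z i j‖ ≤ Z.trace.re := by
  rcases eq_or_ne i j with rfl | hij
  · have h0 := psd_diag_nonneg hZ i
    have hle := psd_diag_le_trace hZ i
    rw [Complex.le_def] at h0 hle
    have hzi : Z i i = ((Z i i).re : ℂ) := Complex.ext rfl (by simpa using h0.2.symm)
    rw [hzi]
    simpa using (abs_of_nonneg h0.1).le.trans hle.1
  · rcases eq_or_ne (Z i j) 0 with hz | hz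
    · rw [hz]
      simpa using (Complex.le_def.mp (psd_trace_nonneg hZ)).1
    · set a : ℝ := ‖Z i j‖ with ha
      set c : ℂ := -((starRingEnd ℂ) (Z i j)) / (a : ℂ) with hc
      set x : Fin n → ℂ := Pi.single i 1 + Pi.single j c with hx
      have habs : (a : ℂ) ≠ 0 := by
        simpa [ha] using (norm_ne_zero_iff.mpr hz)
      have hnormSq : (starRingEnd ℂ) (Z i j) * Z i j = ((a : ℂ))^2 := by
        rw [mul_comm, Complex.mul_conj, Complex.normSq_eq_norm_sq]
        push_cast
        rw [ha]
      have hcZ : c * Z i j = -(a : ℂ) := by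
        rw [hc, div_mul_eq_mul_div, neg_mul, hnormSq]
        rw [pow_two, neg_div, mul_div_assoc, div_self habs, mul_one]
      have hconjc : (starRingEnd ℂ) c = -(Z i j) / (a : ℂ) := by
        rw [hc, map_div₀, map_neg, Complex.conj_conj, Complex.conj_ofReal]
      have hcc : (starRingEnd ℂ) c * c = 1 := by
        rw [hconjc, hc, div_mul_div_comm, neg_mul_neg, mul_comm (Z i j) _, hnormSq, pow_two]
        exact div_self (mul_ne_zero habs habs)
      have hherm : Z j i = (starRingEnd ℂ) (Z i j) := by
        have := hZ.isHermitian.apply j i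
        simpa using this.symm
      have hmv : Z *ᵥ x = fun k => Z k i + Z k j * c := by
        funext k
        simp [hx, mulVec_add, mulVec_single]
        ring
      have hqval : dotProduct (star x) (Z *ᵥ x) = Z i i + Z j j - 2 * (a : ℂ) := by
        rw [hmv, hx, star_add, ← Pi.single_star, ← Pi.single_star, add_dotProduct,
          single_dotProduct, single_dotProduct]
        rw [hherm, star_one, one_mul, Complex.star_def]
        have h3 : Z i j * c = -(a : ℂ) := by rw [mul_comm]; exact hcZ
        have h4 : (starRingEnd ℂ) c * ((starRingEnd ℂ) (Z i j) + Z j j * c)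
            = -(a : ℂ) + Z j j := by
          rw [mul_add, hconjc]
          have h5 : -(Z i j) / (a:ℂ) * (starRingEnd ℂ) (Z i j) = -(a:ℂ) := by
            rw [div_mul_eq_mul_div, neg_mul, mul_comm, hnormSq, pow_two, neg_div,
              mul_div_assoc, div_self habs, mul_one]
          rw [h5]
          congr 1
          calc -(Z i j) / (a:ℂ) * (Z j j * c) = Z j j * ((starRingEnd ℂ) c * c) := by
                rw [hconjc]; ring
          _ = Z j j := by rw [hcc, mul_one]
        rw [h3, h4]
        ring
      have hq := hZ.dotProduct_mulVec_nonneg x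
      rw [hqval, Complex.le_def] at hq
      simp only [Complex.zero_re, Complex.sub_re, Complex.add_re, Complex.mul_re] at hq
      have hii := Complex.le_def.mp (psd_diag_le_trace hZ i)
      have hjj := Complex.le_def.mp (psd_diag_le_trace hZ j)
      have hq1 := hq.1
      simp only [Complex.ofReal_re, Complex.ofReal_im] at hq1
      have h2a : 2 * a ≤ (Z i i).re + (Z j j).re := by
        norm_num at hq1
        linarith [hq1]
      have hZjj0 : 0 ≤ (Z j j).re := (Complex.le_def.mp (psd_diag_nonneg hZ j)).1
      have hZii0 : 0 ≤ (Z i i).re := (Complex.le_def.mp (psd_diag_nonneg hZ i)).1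
      have haa : 0 ≤ a := norm_nonneg _
      have htr0 : 0 ≤ (trace Z).re := (Complex.le_def.mp (psd_trace_nonneg hZ)).1
      linarith [hii.1, hjj.1]


lemma sandwich_apply (Q X : Mn n) : sandwich Q X = Q * X * Q := by
  simp [sandwich, LinearMap.mulLeft_apply, LinearMap.mulRight_apply, mul_assoc]

lemma channel_tp {T : Module.End ℂ (Mn n)} (h : IsChannel T) :
    ∀ X : Mn n, (T X).trace = X.trace := by
  obtain ⟨k, V, hT, hV⟩ := h
  intro X
  rw [hT, Matrix.trace_sum]
  rw [Finset.sum_congr rfl (fun i _ => Matrix.trace_mul_cycle (V i) X (V i)ᴴ)]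
  rw [← Matrix.trace_sum, ← Finset.sum_mul, hV, one_mul]

lemma channel_pos {T : Module.End ℂ (Mn n)} (h : IsChannel T) : IsPosMap T := by
  obtain ⟨k, V, hT, hV⟩ := h
  intro X hX
  rw [hT X]
  refine Finset.sum_induction _ _ (fun a b ha hb => ha.add hb) Matrix.PosSemidef.zero
    (fun i _ => hX.mul_mul_conjTranspose_same (V i))

end Stmt5Aux

set_option maxHeartbeats 4000000 in
/-- main theorem (beyond the irreducible case). Under Assumption I
(`1` is not an eigenvalue of `ℚT`), with `A = I − Λ` and `A^#` its group inverse,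
`I − ℚ₁Λ` is invertible and for every state `ρ` supported in `V^⊥`,
`τ(ρ→V) = Tr(K₁₁([(I − A^# + A^#_d E)]₁₂(ρ)))`, the `(1,2)` block of
`D(I − A^# + A^#_d E)` applied to `ρ`. -/
theorem stmt5 {n : ℕ} (T : Module.End ℂ (Mn n)) (hchan : IsChannel T)
    (P : Mn n) (hPH : P.IsHermitian) (hPidem : P * P = P)
    (Q : Mn n) (hQ : Q = 1 - P)
    (hAssumpI : ¬ Module.End.HasEigenvalue (sandwich Q * T) (1 : ℂ))
    (A B : Module.End ℂ (Mn n × Mn n)) (hA : A = 1 - Lam T Q)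
    (hB1 : A * B * A = A) (hB2 : B * A * B = B) (hB3 : A * B = B * A)
    (ρ : Mn n) (hρpsd : ρ.PosSemidef) (hρtr : ρ.trace = 1) (hρsupp : Q * ρ * Q = ρ) :
    IsUnit (1 - (1 - proj1 n) * Lam T Q) ∧
    (tau T P Q ρ =
      (((Lam T Q * (Ring.inverse (1 - (1 - proj1 n) * Lam T Q)) ^ 2)
          ((((1 - B + diagPart B * Emap n) ((0 : Mn n), ρ)).1, (0 : Mn n)))).1).trace) := by
  classical
  set C : Module.End ℂ (Mn n) := sandwich Q * T with hC
  -- basic projector facts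
  have hQH : Qᴴ = Q := by
    rw [hQ, Matrix.conjTranspose_sub, Matrix.conjTranspose_one, hPH.eq]
  have hQidem : Q * Q = Q := by
    rw [hQ]
    noncomm_ring [hPidem]
  have hTtr : ∀ X : Mn n, (T X).trace = X.trace := channel_tp hchan
  have hTpos : IsPosMap T := channel_pos hchan
  have hCpos : ∀ X : Mn n, X.PosSemidef → (C X).PosSemidef := by
    intro X hX
    have h1 := (hTpos X hX).mul_mul_conjTranspose_same Q
    rw [hQH] at h1
    have h2 : C X = Q * (T X) * Q := by
      rw [hC, Module.End.mul_apply, sandwich_apply]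
    rw [h2]
    exact h1
  have htrQ : ∀ Y : Mn n, (sandwich Q Y).trace = (Q * Y).trace := by
    intro Y
    rw [sandwich_apply, Matrix.trace_mul_cycle, hQidem]
  have htrP : ∀ Y : Mn n, (sandwich P Y).trace = (P * Y).trace := by
    intro Y
    rw [sandwich_apply, Matrix.trace_mul_cycle, hPidem]
  -- the scalar sequence
  set t : ℕ → ℂ := fun r => ((C ^ r) ρ).trace with ht
  have hρr : ∀ r : ℕ, ((C ^ r) ρ).PosSemidef := by
    intro r
    induction r with
    | zero => simpa using hρpsd
    | succ r ih =>
        rw [pow_succ', Module.End.mul_apply]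
        exact hCpos _ ih
  have hCsq : ∀ r : ℕ, (C ^ (r+1)) ρ = sandwich Q (T ((C ^ r) ρ)) := by
    intro r
    rw [pow_succ', Module.End.mul_apply, hC, Module.End.mul_apply]
  have hterm : ∀ r : ℕ, ((sandwich P * T * C ^ r) ρ).trace = t r - t (r + 1) := by
    intro r
    have h1 : (sandwich P * T * C ^ r) ρ = sandwich P (T ((C ^ r) ρ)) := rfl
    have hP' : P = 1 - Q := by rw [hQ, sub_sub_cancel]
    rw [h1, htrP, hP', sub_mul, one_mul, Matrix.trace_sub, hTtr, ← htrQ, ← hCsq]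
  -- positivity facts
  set u : ℕ → ℝ := fun r => (t r).re with hu
  have htu : ∀ r, t r = ((u r : ℝ) : ℂ) := fun r => psd_trace_real (hρr r)
  have hu0 : ∀ r, 0 ≤ u r := fun r => (Complex.le_def.mp (psd_trace_nonneg (hρr r))).1
  have humono : ∀ r, u (r + 1) ≤ u r := by
    intro r
    have hpsd : (sandwich P (T ((C ^ r) ρ))).PosSemidef := by
      have h1 := (hTpos _ (hρr r)).mul_mul_conjTranspose_same P
      rw [hPH.eq] at h1
      rw [sandwich_apply]
      exact h1
    have h0 : (0:ℂ) ≤ t r - t (r+1) := by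
      rw [← hterm r]
      exact psd_trace_nonneg hpsd
    have h2 := (Complex.le_def.mp h0).1
    simp only [Complex.zero_re, Complex.sub_re] at h2
    linarith
  have hanti : Antitone u := antitone_nat_of_succ_le humono
  -- invertibility of 1 - C
  have hCunit : IsUnit ((1 : Module.End ℂ (Mn n)) - C) := by
    by_contra hcon
    apply hAssumpI
    rw [Module.End.hasEigenvalue_iff_mem_spectrum, spectrum.mem_iff]
    simpa using hcon
  set J : Module.End ℂ (Mn n) := Ring.inverse ((1 : Module.End ℂ (Mn n)) - C) with hJ
  have hJ1 : J * (1 - C) = 1 := Ring.inverse_mul_cancel _ hCunit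
  have hJ2 : (1 - C) * J = 1 := Ring.mul_inverse_cancel _ hCunit
  have hJap : ∀ Y : Mn n, J Y - J (C Y) = Y := by
    intro Y
    have h := LinearMap.ext_iff.mp hJ1 Y
    simpa [Module.End.mul_apply, LinearMap.sub_apply, map_sub] using h
  have hJap2 : ∀ Y : Mn n, J Y - C (J Y) = Y := by
    intro Y
    have h := LinearMap.ext_iff.mp hJ2 Y
    simpa [Module.End.mul_apply, LinearMap.sub_apply, map_sub] using h
  -- invertibility of 1 - (1-proj1) Lam
  have hMx : ∀ x : Mn n × Mn n,
      ((1 - (1 - proj1 n) * Lam T Q) x) = (x.1, x.2 - C (x.1 + x.2)) := by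
    intro x
    have hg : Lam T Q x = ((1 - sandwich Q) (T (x.1 + x.2)), C (x.1 + x.2)) := by
      rw [hC]
      rfl
    simp only [LinearMap.sub_apply, Module.End.one_apply, Module.End.mul_apply, hg]
    simp [proj1, Prod.ext_iff]
  set Ninv : Module.End ℂ (Mn n × Mn n) :=
    LinearMap.prod (LinearMap.fst ℂ (Mn n) (Mn n))
      (J ∘ₗ ((C ∘ₗ LinearMap.fst ℂ (Mn n) (Mn n)) + LinearMap.snd ℂ (Mn n) (Mn n)))
    with hNinv
  have hNx : ∀ x : Mn n × Mn n, Ninv x = (x.1, J (C x.1 + x.2)) := fun x => rfl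
  have hMN : (1 - (1 - proj1 n) * Lam T Q) * Ninv = 1 := by
    apply LinearMap.ext
    intro x
    rw [Module.End.mul_apply, hNx, hMx]
    have h2 : J (C x.1 + x.2) - C (x.1 + J (C x.1 + x.2)) = x.2 := by
      have h3 := hJap2 (C x.1 + x.2)
      rw [show C (x.1 + J (C x.1 + x.2)) = C x.1 + C (J (C x.1 + x.2)) from map_add C _ _]
      calc J (C x.1 + x.2) - (C x.1 + C (J (C x.1 + x.2)))
          = (J (C x.1 + x.2) - C (J (C x.1 + x.2))) - C x.1 := by abel
      _ = (C x.1 + x.2) - C x.1 := by rw [h3]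
      _ = x.2 := by abel
    rw [h2]
    rfl
  have hNM : Ninv * (1 - (1 - proj1 n) * Lam T Q) = 1 := by
    apply LinearMap.ext
    intro x
    rw [Module.End.mul_apply, hMx, hNx]
    have h2 : J (C x.1 + (x.2 - C (x.1 + x.2))) = x.2 := by
      have h4 : C x.1 + (x.2 - C (x.1 + x.2)) = x.2 - C x.2 := by
        rw [map_add]
        abel
      rw [h4, map_sub]
      exact hJap x.2
    rw [h2]
    rfl
  have hMunit : IsUnit (1 - (1 - proj1 n) * Lam T Q) :=
    ⟨⟨1 - (1 - proj1 n) * Lam T Q, Ninv, hMN, hNM⟩, rfl⟩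
  refine ⟨hMunit, ?_⟩
  have hRinv : Ring.inverse (1 - (1 - proj1 n) * Lam T Q) = Ninv :=
    Ring.inverse_unit ⟨1 - (1 - proj1 n) * Lam T Q, Ninv, hMN, hNM⟩
  -- the (1,2) block applied to ρ is ρ itself
  have hv : Lam T Q ((ρ, -ρ) : Mn n × Mn n) = 0 := by
    have hsum0 : sumPair n ((ρ, -ρ) : Mn n × Mn n) = 0 := by
      simp [sumPair]
    simp only [Lam, LinearMap.prod_apply, LinearMap.comp_apply, Function.prod, hsum0, map_zero]
    simp
  have hAv : A ((ρ, -ρ) : Mn n × Mn n) = (ρ, -ρ) := by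
    rw [hA, LinearMap.sub_apply, Module.End.one_apply, hv, sub_zero]
  have hABv : (A * B) ((ρ, -ρ) : Mn n × Mn n) = (ρ, -ρ) := by
    calc (A * B) ((ρ, -ρ) : Mn n × Mn n) = (A * B) (A (ρ, -ρ)) := by rw [hAv]
    _ = (A * B * A) ((ρ, -ρ) : Mn n × Mn n) := rfl
    _ = A ((ρ, -ρ) : Mn n × Mn n) := by rw [hB1]
    _ = (ρ, -ρ) := hAv
  have hBv : B ((ρ, -ρ) : Mn n × Mn n) = (ρ, -ρ) := by
    have h1 : A (B ((ρ, -ρ) : Mn n × Mn n)) = B ((ρ, -ρ) : Mn n × Mn n) := by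
      calc A (B ((ρ, -ρ) : Mn n × Mn n)) = (A * B) ((ρ, -ρ) : Mn n × Mn n) := rfl
      _ = (B * A) ((ρ, -ρ) : Mn n × Mn n) := by rw [hB3]
      _ = B (A ((ρ, -ρ) : Mn n × Mn n)) := rfl
      _ = B ((ρ, -ρ) : Mn n × Mn n) := by rw [hAv]
    calc B ((ρ, -ρ) : Mn n × Mn n) = A (B ((ρ, -ρ) : Mn n × Mn n)) := h1.symm
    _ = (A * B) ((ρ, -ρ) : Mn n × Mn n) := rfl
    _ = (ρ, -ρ) := hABv
  have hXeq : ((1 - B + diagPart B * Emap n) (((0 : Mn n), ρ) : Mn n × Mn n)).1 = ρ := by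
    have hBsub : B ((ρ, (0 : Mn n)) : Mn n × Mn n)
        = B (((0 : Mn n), ρ) : Mn n × Mn n) + (ρ, -ρ) := by
      rw [← hBv, ← map_add]
      congr 1
      simp
    have hE : Emap n (((0 : Mn n), ρ) : Mn n × Mn n) = (ρ, ρ) := by
      simp [Emap, sumPair, Function.prod]
    simp only [LinearMap.add_apply, LinearMap.sub_apply, Module.End.one_apply,
      Module.End.mul_apply, hE, diagPart, proj1, proj2]
    simp only [LinearMap.add_apply, Module.End.mul_apply, LinearMap.comp_apply,
      LinearMap.fst_apply, LinearMap.snd_apply, LinearMap.inl_apply, LinearMap.inr_apply]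
    simp only [Prod.fst_add, Prod.fst_sub]
    rw [hBsub]
    simp
  rw [hRinv, hXeq]
  -- compute the right-hand side
  have hNsq : (Ninv ^ 2) ((ρ, (0 : Mn n)) : Mn n × Mn n) = (ρ, J (C ρ + J (C ρ))) := by
    rw [pow_two, Module.End.mul_apply, hNx, hNx]
    simp
  have hJrho : J ρ = ρ + J (C ρ) := by
    have := hJap ρ
    rw [sub_eq_iff_eq_add] at this
    exact this
  have hw : ρ + J (C ρ + J (C ρ)) = J (J ρ) := by
    calc ρ + J (C ρ + J (C ρ)) = ρ + (J (C ρ) + J (J (C ρ))) := by rw [map_add]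
    _ = (ρ + J (C ρ)) + J (J (C ρ)) := by abel
    _ = J ρ + J (J (C ρ)) := by rw [← hJrho]
    _ = J (ρ + J (C ρ)) := by rw [← map_add]
    _ = J (J ρ) := by rw [← hJrho]
  have hLamN : ((Lam T Q * Ninv ^ 2) ((ρ, (0 : Mn n)) : Mn n × Mn n)).1
      = T (J (J ρ)) - sandwich Q (T (J (J ρ))) := by
    rw [Module.End.mul_apply, hNsq]
    have hg : (Lam T Q ((ρ, J (C ρ + J (C ρ))) : Mn n × Mn n)).1
        = (1 - sandwich Q) (T (ρ + J (C ρ + J (C ρ)))) := rfl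
    rw [hg, hw]
    simp [LinearMap.sub_apply]
  rw [hLamN]
  have hRHS : (T (J (J ρ)) - sandwich Q (T (J (J ρ)))).trace = (J ρ).trace := by
    rw [Matrix.trace_sub, hTtr]
    have h5 : (sandwich Q (T (J (J ρ)))).trace = (C (J (J ρ))).trace := rfl
    rw [h5, ← Matrix.trace_sub, hJap2 (J ρ)]
  rw [hRHS]
  -- ===================== analytic part =====================
  have hJtr : ∀ Z : Mn n, (J Z).trace
      = ∑ i : Fin n, ∑ j : Fin n, Z i j * (J (Matrix.single i j 1)).trace := by
    intro Z
    conv_lhs => rw [matrix_eq_sum_single Z]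
    rw [map_sum, Matrix.trace_sum]
    refine Finset.sum_congr rfl fun i _ => ?_
    rw [map_sum, Matrix.trace_sum]
    refine Finset.sum_congr rfl fun j _ => ?_
    have h1 : Matrix.single i j (Z i j) = Z i j • Matrix.single i j (1:ℂ) := by
      rw [smul_single, smul_eq_mul, mul_one]
    rw [h1, _root_.map_smul, Matrix.trace_smul, smul_eq_mul]
  set Kc : ℝ := ∑ i : Fin n, ∑ j : Fin n,
      ‖(J (Matrix.single i j 1)).trace‖ with hKc
  have hKc0 : (0:ℝ) ≤ Kc := by
    rw [hKc]
    refine Finset.sum_nonneg fun i _ => Finset.sum_nonneg fun j _ => norm_nonneg _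
  have hJZb : ∀ N : ℕ, ‖(J ((C ^ N) ρ)).trace‖ ≤ Kc * u N := by
    intro N
    rw [hJtr]
    have hentry : ∀ i j : Fin n, ‖((C ^ N) ρ) i j‖ ≤ u N := fun i j =>
      psd_entry_abs_le_trace (hρr N) i j
    calc ‖∑ i : Fin n, ∑ j : Fin n,
          ((C ^ N) ρ) i j * (J (Matrix.single i j 1)).trace‖
        ≤ ∑ i : Fin n, ‖∑ j : Fin n,
            ((C ^ N) ρ) i j * (J (Matrix.single i j 1)).trace‖ := norm_sum_le _ _
    _ ≤ ∑ i : Fin n, ∑ j : Fin n,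
          ‖((C ^ N) ρ) i j * (J (Matrix.single i j 1)).trace‖ :=
        Finset.sum_le_sum fun i _ => norm_sum_le _ _
    _ ≤ ∑ i : Fin n, ∑ j : Fin n,
          ‖(J (Matrix.single i j 1)).trace‖ * u N := by
        refine Finset.sum_le_sum fun i _ => Finset.sum_le_sum fun j _ => ?_
        rw [norm_mul, mul_comm]
        exact mul_le_mul_of_nonneg_left (hentry i j) (norm_nonneg _)
    _ = Kc * u N := by
        rw [hKc, Finset.sum_mul]
        exact Finset.sum_congr rfl fun i _ => by rw [Finset.sum_mul]
  have htele : ∀ N : ℕ, (∑ r ∈ Finset.range N, t r)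
      = (J ρ).trace - (J ((C ^ N) ρ)).trace := by
    intro N
    have hstep : ∀ r : ℕ,
        t r = (J ((C ^ r) ρ)).trace - (J ((C ^ (r+1)) ρ)).trace := by
      intro r
      have h1 : (C ^ (r+1)) ρ = C ((C ^ r) ρ) := by rw [pow_succ', Module.End.mul_apply]
      calc t r = ((C ^ r) ρ).trace := rfl
      _ = (J ((C ^ r) ρ) - J (C ((C ^ r) ρ))).trace := by rw [hJap]
      _ = (J ((C ^ r) ρ)).trace - (J ((C ^ (r+1)) ρ)).trace := by
          rw [Matrix.trace_sub, h1]
    rw [Finset.sum_congr rfl (fun r _ => hstep r), Finset.sum_range_sub']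
    simp
  set s : ℕ → ℝ := fun N => ∑ r ∈ Finset.range N, u r with hs
  have hstC : ∀ N : ℕ, (∑ r ∈ Finset.range N, t r) = ((s N : ℝ) : ℂ) := by
    intro N
    rw [hs]
    push_cast
    exact Finset.sum_congr rfl fun r _ => htu r
  have hsbound : ∀ N, s N ≤ ‖(J ρ).trace‖ + Kc * u 0 := by
    intro N
    have h1 : ((s N : ℝ):ℂ) = (J ρ).trace - (J ((C ^ N) ρ)).trace := by
      rw [← hstC, htele]
    have h2 : s N = ((J ρ).trace - (J ((C ^ N) ρ)).trace).re := by
      rw [← h1, Complex.ofReal_re]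
    rw [h2]
    calc ((J ρ).trace - (J ((C ^ N) ρ)).trace).re
        ≤ |((J ρ).trace - (J ((C ^ N) ρ)).trace).re| := le_abs_self _
    _ ≤ ‖(J ρ).trace - (J ((C ^ N) ρ)).trace‖ := Complex.abs_re_le_norm _
    _ ≤ ‖(J ρ).trace‖ + ‖(J ((C ^ N) ρ)).trace‖ := by
        have := norm_sub_le ((J ρ).trace) ((J ((C ^ N) ρ)).trace)
        simpa using this
    _ ≤ ‖(J ρ).trace‖ + Kc * u 0 := by
        refine add_le_add_right ((hJZb N).trans ?_) _
        exact mul_le_mul_of_nonneg_left (hanti (Nat.zero_le N)) hKc0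
  have husum : Summable u := summable_of_sum_range_le hu0 hsbound
  have hu_to0 : Tendsto u atTop (𝓝 0) := husum.tendsto_atTop_zero
  have hJC0 : Tendsto (fun N => (J ((C ^ N) ρ)).trace) atTop (𝓝 (0:ℂ)) := by
    refine squeeze_zero_norm (fun N => ?_)
      (?_ : Tendsto (fun N => Kc * u N) atTop (𝓝 0))
    · exact hJZb N
    · simpa using hu_to0.const_mul Kc
  have hts : Tendsto (fun N => ∑ r ∈ Finset.range N, t r) atTop (𝓝 ((J ρ).trace)) := by
    simp only [htele]
    simpa using (tendsto_const_nhds (x := (J ρ).trace) (f := (atTop : Filter ℕ))).sub hJC0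
  have hsre : Tendsto s atTop (𝓝 (((J ρ).trace).re)) := by
    have heq : s = fun N => (∑ r ∈ Finset.range N, t r).re := by
      funext N
      rw [hstC, Complex.ofReal_re]
    rw [heq]
    exact (Complex.continuous_re.tendsto _).comp hts
  set L : ℝ := ((J ρ).trace).re with hL
  have hLtr : (J ρ).trace = ((L : ℝ) : ℂ) := by
    have h1 : Tendsto (fun N => ((s N : ℝ):ℂ)) atTop (𝓝 ((L:ℝ):ℂ)) :=
      (Complex.continuous_ofReal.tendsto _).comp hsre
    have h2 : Tendsto (fun N => ((s N : ℝ):ℂ)) atTop (𝓝 ((J ρ).trace)) := by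
      have heq : (fun N => ((s N : ℝ):ℂ)) = fun N => ∑ r ∈ Finset.range N, t r :=
        funext fun N => (hstC N).symm
      rw [heq]
      exact hts
    exact tendsto_nhds_unique h2 h1
  have hs2 : Tendsto (fun N : ℕ => s ((N+1)/2)) atTop (𝓝 L) := by
    refine hsre.comp (tendsto_atTop_atTop.mpr fun b => ⟨2*b, fun a ha => by omega⟩)
  have hs1 : Tendsto (fun N : ℕ => s (N+1)) atTop (𝓝 L) := hsre.comp (tendsto_add_atTop_nat 1)
  have hNu : Tendsto (fun N : ℕ => ((N:ℝ)+1) * u N) atTop (𝓝 0) := by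
    have hub : ∀ N : ℕ, ((N:ℝ)+1) * u N ≤ 2 * (s (N+1) - s ((N+1)/2)) + u N := by
      intro N
      have hab : (N+1)/2 ≤ N+1 := Nat.div_le_self _ _
      have hIco : s (N+1) - s ((N+1)/2) = ∑ r ∈ Finset.Ico ((N+1)/2) (N+1), u r :=
        (Finset.sum_Ico_eq_sub _ hab).symm
      have hcard : ∀ r ∈ Finset.Ico ((N+1)/2) (N+1), u N ≤ u r := by
        intro r hr
        rw [Finset.mem_Ico] at hr
        exact hanti (by omega)
      have h6 := Finset.card_nsmul_le_sum _ _ _ hcard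
      rw [Nat.card_Ico] at h6
      have h7 : ((N + 1 - (N+1)/2 : ℕ):ℝ) * u N ≤ s (N+1) - s ((N+1)/2) := by
        rw [hIco]
        simpa [nsmul_eq_mul] using h6
      have h8 : (N:ℝ) + 1 ≤ 2 * ((N + 1 - (N+1)/2 : ℕ):ℝ) + 1 := by
        have h9 : N + 1 ≤ 2 * (N + 1 - (N+1)/2) + 1 := by omega
        exact_mod_cast h9
      nlinarith [hu0 N, h7, mul_le_mul_of_nonneg_right h8 (hu0 N)]
    have hlb : ∀ N : ℕ, 0 ≤ ((N:ℝ)+1) * u N := fun N => mul_nonneg (by positivity) (hu0 N)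
    have htend : Tendsto (fun N : ℕ => 2 * (s (N+1) - s ((N+1)/2)) + u N) atTop (𝓝 0) := by
      have h10 := ((hs1.sub hs2).const_mul 2).add hu_to0
      have h11 : (2:ℝ) * (L - L) + 0 = 0 := by ring
      rw [h11] at h10
      exact h10
    exact tendsto_of_tendsto_of_tendsto_of_le_of_le tendsto_const_nhds htend hlb hub
  set g : ℕ → ℝ := fun r => ((r:ℝ)+1) * (u r - u (r+1)) with hg
  have hgps : ∀ N : ℕ, ∑ r ∈ Finset.range N, g r = s (N+1) - ((N:ℝ)+1) * u N := by
    intro N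
    induction N with
    | zero => simp [hs, hg]
    | succ N ih =>
        rw [Finset.sum_range_succ, ih]
        have h9 : s (N+1+1) = s (N+1) + u (N+1) := by
          rw [hs]
          exact Finset.sum_range_succ _ _
        rw [h9, hg]
        push_cast
        ring
  have hgt : Tendsto (fun N => ∑ r ∈ Finset.range N, g r) atTop (𝓝 L) := by
    simp only [hgps]
    have h12 := hs1.sub hNu
    rw [sub_zero] at h12
    exact h12
  have hgnn : ∀ r, 0 ≤ g r := by
    intro r
    rw [hg]
    have h13 : (0:ℝ) ≤ (r:ℝ) + 1 := by positivity
    exact mul_nonneg h13 (sub_nonneg.2 (humono r))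
  have hgHasSum : HasSum g L := (hasSum_iff_tendsto_nat_of_nonneg hgnn L).mpr hgt
  have hfHasSum : HasSum (fun r : ℕ => ((g r : ℝ):ℂ)) ((L:ℝ):ℂ) :=
    hgHasSum.mapL Complex.ofRealCLM
  unfold tau
  rw [← hC, hLtr, ← hfHasSum.tsum_eq]
  apply tsum_congr
  intro r
  rw [hterm r, htu r, htu (r+1), hg]
  push_cast
  ring
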